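/- If A is invertible and ρ(|A^{-1}|) < 1, then for every b ∈ ℝ^n the absolute value equation Ax - |x| = b has at most one solution. -/

import Mathlib

open Matrix

open Filter

/-- Componentwise absolute value of a vector. -/
noncomputable def absv {n : ℕ} (x : Fin n → ℝ) : Fin n → ℝ := fun i => |x i|

/-- Euclidean norm of a vector. -/
noncomputable def enorm {n : ℕ} (x : Fin n → ℝ) : ℝ := Real.sqrt (∑ i, x i ^ 2)

/-- Largest singular value (spectral / operator 2-norm). -/
noncomputable def sigmaMax {n : ℕ} (A : Matrix (Fin n) (Fin n) ℝ) : ℝ :=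
  sSup {r | ∃ x : Fin n → ℝ, _root_.enorm x = 1 ∧ r = _root_.enorm (A.mulVec x)}

/-- Smallest singular value. -/
noncomputable def sigmaMin {n : ℕ} (A : Matrix (Fin n) (Fin n) ℝ) : ℝ :=
  sInf {r | ∃ x : Fin n → ℝ, _root_.enorm x = 1 ∧ r = _root_.enorm (A.mulVec x)}

/-- Spectral radius of a real matrix (via its complex spectrum). -/
noncomputable def specRad {n : ℕ} (A : Matrix (Fin n) (Fin n) ℝ) : ENNReal :=
  spectralRadius ℂ (A.map (Complex.ofReal ·))

section aux

attribute [local instance] Matrix.linftyOpNormedAddCommGroup Matrix.linftyOpNormedRing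
  Matrix.linftyOpNormedAlgebra Matrix.linftyOpNormedSpace

lemma aux_nnnorm_map {n : ℕ} (M : Matrix (Fin n) (Fin n) ℝ) :
    ‖M.map (Complex.ofReal ·)‖₊ = ‖M‖₊ := by
  simp [Matrix.linfty_opNNNorm_def, Matrix.map_apply, Pi.nnnorm_def]

lemma aux_pow_small {n : ℕ} (M : Matrix (Fin n) (Fin n) ℝ)
    (hM : spectralRadius ℂ (M.map (Complex.ofReal ·)) < 1) :
    ∃ k : ℕ, 1 ≤ k ∧ ‖M ^ k‖ < 1 := by
  haveI : CompleteSpace (Matrix (Fin n) (Fin n) ℂ) :=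
    FiniteDimensional.complete ℂ (Matrix (Fin n) (Fin n) ℂ)
  set Mc := M.map (Complex.ofReal ·) with hMc
  have hpow : ∀ k : ℕ, Mc ^ k = (M ^ k).map (Complex.ofReal ·) := by
    intro k
    have : Mc = Complex.ofRealHom.mapMatrix M := rfl
    rw [this, ← map_pow]
    rfl
  have := spectrum.pow_nnnorm_pow_one_div_tendsto_nhds_spectralRadius Mc
  have hev : ∀ᶠ k : ℕ in atTop, (‖Mc ^ k‖₊ : ENNReal) ^ (1 / (k : ℝ)) < 1 :=
    this.eventually_lt_const hM
  obtain ⟨k, hlt, hk⟩ := (hev.and (eventually_ge_atTop 1)).exists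
  refine ⟨k, hk, ?_⟩
  have hnn : ‖Mc ^ k‖₊ < 1 := by
    by_contra hc
    push_neg at hc
    have h1 : (1 : ENNReal) ≤ (‖Mc ^ k‖₊ : ENNReal) := by exact_mod_cast hc
    have hpos : (0 : ℝ) < 1 / (k : ℝ) := by positivity
    have : (1 : ENNReal) ^ (1 / (k : ℝ)) ≤ (‖Mc ^ k‖₊ : ENNReal) ^ (1 / (k : ℝ)) :=
      ENNReal.rpow_le_rpow h1 hpos.le
    rw [ENNReal.one_rpow] at this
    exact absurd hlt (not_lt.mpr this)
  rw [hpow, aux_nnnorm_map] at hnn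
  exact_mod_cast hnn

lemma aux_norm_mulVec {n : ℕ} (M : Matrix (Fin n) (Fin n) ℝ) (v : Fin n → ℝ) :
    ‖M.mulVec v‖ ≤ ‖M‖ * ‖v‖ :=
  Matrix.linfty_opNorm_mulVec M v

end aux

lemma aux_mulVec_mono {n : ℕ} {B : Matrix (Fin n) (Fin n) ℝ}
    (hB : ∀ i j, 0 ≤ B i j) {v w : Fin n → ℝ} (hvw : ∀ i, v i ≤ w i) :
    ∀ i, B.mulVec v i ≤ B.mulVec w i := by
  intro i
  simp only [Matrix.mulVec, dotProduct]
  refine Finset.sum_le_sum fun j _ => ?_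
  exact mul_le_mul_of_nonneg_left (hvw j) (hB i j)

lemma aux_pow_nonneg {n : ℕ} {B : Matrix (Fin n) (Fin n) ℝ}
    (hB : ∀ i j, 0 ≤ B i j) : ∀ k, ∀ i j, 0 ≤ (B ^ k) i j := by
  intro k
  induction k with
  | zero => intro i j; simp [pow_zero, Matrix.one_apply]; positivity
  | succ m ih =>
    intro i j
    rw [pow_succ, Matrix.mul_apply]
    exact Finset.sum_nonneg fun l _ => mul_nonneg (ih i l) (hB l j)

lemma aux_iter {n : ℕ} {B : Matrix (Fin n) (Fin n) ℝ}
    (hB : ∀ i j, 0 ≤ B i j) {v : Fin n → ℝ}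
    (hv : ∀ i, v i ≤ B.mulVec v i) : ∀ k, ∀ i, v i ≤ (B ^ k).mulVec v i := by
  intro k
  induction k with
  | zero => intro i; simp [Matrix.one_mulVec]
  | succ m ih =>
    intro i
    have h1 : B.mulVec v i ≤ B.mulVec ((B ^ m).mulVec v) i :=
      aux_mulVec_mono hB ih i
    calc v i ≤ B.mulVec v i := hv i
      _ ≤ B.mulVec ((B ^ m).mulVec v) i := h1
      _ = (B ^ (m + 1)).mulVec v i := by
          rw [Matrix.mulVec_mulVec, pow_succ']

theorem stmt6 {n : ℕ} (A : Matrix (Fin n) (Fin n) ℝ) (hA : IsUnit A.det)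
    (h : specRad ((A⁻¹).map (fun a => |a|)) < 1) :
    ∀ b x y : Fin n → ℝ,
      A.mulVec x - absv x = b → A.mulVec y - absv y = b → x = y := by
  intro b x y hx hy
  set B : Matrix (Fin n) (Fin n) ℝ := (A⁻¹).map (fun a => |a|) with hBdef
  have hB : ∀ i j, 0 ≤ B i j := fun i j => abs_nonneg _
  -- x - y = A⁻¹ *ᵥ (absv x - absv y)
  have hAxy : A.mulVec (x - y) = absv x - absv y := by
    rw [Matrix.mulVec_sub]
    have : A.mulVec x - A.mulVec y - (absv x - absv y) = 0 := by
      have := hx.trans hy.symm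
      abel_nf
      abel_nf at this
      linear_combination (norm := module) this
    linear_combination (norm := module) this
  have hxy : x - y = (A⁻¹).mulVec (absv x - absv y) := by
    rw [← hAxy, Matrix.mulVec_mulVec, Matrix.nonsing_inv_mul _ hA, Matrix.one_mulVec]
  set v : Fin n → ℝ := fun i => |x i - y i| with hvdef
  have hv : ∀ i, v i ≤ B.mulVec v i := by
    intro i
    have h1 : |x i - y i| = |((A⁻¹).mulVec (absv x - absv y)) i| := by
      rw [← hxy]; rfl
    show |x i - y i| ≤ (B.mulVec v) i
    rw [h1]
    simp only [Matrix.mulVec, dotProduct]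
    calc |∑ j, A⁻¹ i j * (absv x - absv y) j|
        ≤ ∑ j, |A⁻¹ i j * (absv x - absv y) j| := Finset.abs_sum_le_sum_abs _ _
      _ ≤ ∑ j, B i j * v j := by
          refine Finset.sum_le_sum fun j _ => ?_
          rw [abs_mul]
          refine mul_le_mul_of_nonneg_left ?_ (abs_nonneg _)
          have : |(absv x - absv y) j| = |(|x j| - |y j|)| := by
            simp [absv]
          rw [this]
          exact abs_abs_sub_abs_le_abs_sub _ _
      _ = (∑ j, B i j * v j) := rfl
  obtain ⟨k, hk1, hk⟩ := aux_pow_small B h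
  have hiter := aux_iter hB hv k
  -- norms
  letI : NormedAddCommGroup (Matrix (Fin n) (Fin n) ℝ) := Matrix.linftyOpNormedAddCommGroup
  have hvz : v = 0 := by
    by_contra hne
    have hvnorm : 0 < ‖v‖ := by
      rw [norm_pos_iff]; exact hne
    have hle : ‖v‖ ≤ ‖(B ^ k).mulVec v‖ := by
      rw [pi_norm_le_iff_of_nonneg (norm_nonneg _)]
      intro i
      have h0 : 0 ≤ v i := abs_nonneg _
      have : ‖v i‖ = v i := Real.norm_of_nonneg h0
      rw [this]
      calc v i ≤ (B ^ k).mulVec v i := hiter i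
        _ ≤ ‖(B ^ k).mulVec v i‖ := le_abs_self _
        _ ≤ ‖(B ^ k).mulVec v‖ := norm_le_pi_norm _ i
    have hle2 : ‖(B ^ k).mulVec v‖ ≤ ‖B ^ k‖ * ‖v‖ := aux_norm_mulVec _ v
    have : ‖v‖ ≤ ‖B ^ k‖ * ‖v‖ := hle.trans hle2
    nlinarith
  have : x - y = 0 := by
    funext i
    have := congrFun hvz i
    simp only [hvdef, Pi.zero_apply] at this
    have := abs_eq_zero.mp this
    simpa using this
  exact sub_eq_zero.mp this
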